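/- Let γ be a finite simple graph, every connected component of which has an even number of vertices, and let H be a spanning subgraph of γ (same vertex set, edge set contained in that of γ). Let c be the number of connected components of γ, let n_e be the number of connected components of H with an even number of vertices, and n_o the number of connected components of H with an odd number of vertices. Then 2·c ≤ 2·n_e + n_o, i.e. c ≤ n_e + n_o/2. -/

import Mathlib

/-- If every connected component of a finite simple graph `γ` is even, and `H` is a spanning
subgraph of `γ` (same vertices, `H ≤ γ`), then `2c ≤ 2 n_e + n_o`, where `c` is the number of
connected components of `γ` and `n_e` (resp. `n_o`) is the number of even (resp. odd)
connected components of `H`. -/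
theorem components_bound_of_even_components {V : Type*} [Fintype V]
    (γ H : SimpleGraph V) (hH : H ≤ γ)
    (heven : ∀ c : γ.ConnectedComponent,
      Even (Nat.card {v : V // γ.connectedComponentMk v = c})) :
    2 * Nat.card γ.ConnectedComponent ≤
      2 * Nat.card {c : H.ConnectedComponent //
            Even (Nat.card {v : V // H.connectedComponentMk v = c})} +
        Nat.card {c : H.ConnectedComponent //
            Odd (Nat.card {v : V // H.connectedComponentMk v = c})} := by
  classical
  haveI : Fintype γ.ConnectedComponent := Fintype.ofFinite _
  haveI : Fintype H.ConnectedComponent := Fintype.ofFinite _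
  set f : H.ConnectedComponent → γ.ConnectedComponent :=
    fun c => c.map (SimpleGraph.Hom.ofLE hH) with hfdef
  have hf : ∀ v : V, f (H.connectedComponentMk v) = γ.connectedComponentMk v :=
    fun v => rfl
  set w : H.ConnectedComponent → ℕ := fun c =>
    if Even (Nat.card {v : V // H.connectedComponentMk v = c}) then 2 else 1 with hwdef
  have hw1 : ∀ c, 1 ≤ w c := by
    intro c; simp only [hwdef]; split <;> omega
  -- the vertex count of a γ-component is the sum of the vertex counts of the
  -- H-components mapping to it
  have hpart : ∀ d : γ.ConnectedComponent,
      Nat.card {v : V // γ.connectedComponentMk v = d} =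
      ∑ c ∈ Finset.univ.filter (fun c => f c = d),
        Nat.card {v : V // H.connectedComponentMk v = c} := by
    intro d
    rw [Nat.card_eq_fintype_card, Fintype.card_subtype]
    have := Finset.card_eq_sum_card_fiberwise
      (s := Finset.univ.filter (fun v : V => γ.connectedComponentMk v = d))
      (t := Finset.univ.filter (fun c : H.ConnectedComponent => f c = d))
      (f := fun v => H.connectedComponentMk v)
      (by intro v hv; simp only [Finset.coe_filter, Set.mem_setOf_eq, Finset.mem_filter, Finset.mem_univ, true_and] at *
          rw [← hv]; exact hf v)
    rw [this]
    refine Finset.sum_congr rfl ?_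
    intro c hc
    simp only [Finset.mem_filter, Finset.mem_univ, true_and] at hc
    rw [Nat.card_eq_fintype_card, Fintype.card_subtype]
    congr 1
    ext v
    simp only [Finset.mem_filter, Finset.mem_univ, true_and, and_iff_right_iff_imp]
    intro h; rw [← hc, ← h]; exact (hf v).symm
  have hfiber : ∀ d : γ.ConnectedComponent,
      2 ≤ ∑ c ∈ Finset.univ.filter (fun c => f c = d), w c := by
    intro d
    obtain ⟨v, rfl⟩ := d.exists_rep
    set c₀ := H.connectedComponentMk v with hc₀
    have hc₀mem : c₀ ∈ Finset.univ.filter (fun c => f c = γ.connectedComponentMk v) := by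
      simp [hf v, hc₀]
    by_cases hev : Even (Nat.card {u : V // H.connectedComponentMk u = c₀})
    · have : w c₀ = 2 := by simp only [hwdef, if_pos hev]
      calc 2 = w c₀ := this.symm
        _ ≤ _ := Finset.single_le_sum (fun c _ => Nat.zero_le (w c)) hc₀mem
    · -- c₀ is odd, so the fiber cannot be a singleton
      have hcard : 1 ≤ (Finset.univ.filter
          (fun c => f c = γ.connectedComponentMk v)).card :=
        Finset.card_pos.mpr ⟨c₀, hc₀mem⟩
      have h2 : 2 ≤ (Finset.univ.filter
          (fun c => f c = γ.connectedComponentMk v)).card := by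
        by_contra h
        have h1 : (Finset.univ.filter
            (fun c => f c = γ.connectedComponentMk v)).card = 1 := by omega
        obtain ⟨a, ha⟩ := Finset.card_eq_one.mp h1
        have hac₀ : a = c₀ := by
          have := hc₀mem; rw [ha] at this; exact (Finset.mem_singleton.mp this).symm
        have := hpart (γ.connectedComponentMk v)
        rw [ha, hac₀, Finset.sum_singleton] at this
        have hevd := heven (γ.connectedComponentMk v)
        rw [this] at hevd
        exact hev hevd
      calc 2 ≤ (Finset.univ.filter (fun c => f c = γ.connectedComponentMk v)).card := h2
        _ = ∑ c ∈ Finset.univ.filter (fun c => f c = γ.connectedComponentMk v), 1 := by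
            simp
        _ ≤ _ := Finset.sum_le_sum (fun c _ => hw1 c)
  have hsum : ∑ c : H.ConnectedComponent, w c =
      2 * Nat.card {c : H.ConnectedComponent //
            Even (Nat.card {v : V // H.connectedComponentMk v = c})} +
        Nat.card {c : H.ConnectedComponent //
            Odd (Nat.card {v : V // H.connectedComponentMk v = c})} := by
    rw [Nat.card_eq_fintype_card, Nat.card_eq_fintype_card,
      Fintype.card_subtype, Fintype.card_subtype]
    rw [hwdef, Finset.sum_ite, Finset.sum_const, Finset.sum_const]
    have : (Finset.univ.filter fun c : H.ConnectedComponent =>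
        ¬ Even (Nat.card {v : V // H.connectedComponentMk v = c})) =
      (Finset.univ.filter fun c : H.ConnectedComponent =>
        Odd (Nat.card {v : V // H.connectedComponentMk v = c})) := by
      apply Finset.filter_congr
      intro c _
      exact Nat.not_even_iff_odd
    rw [this]
    simp [mul_comm]
  calc 2 * Nat.card γ.ConnectedComponent = ∑ _d : γ.ConnectedComponent, 2 := by
        simp [Nat.card_eq_fintype_card, mul_comm]
    _ ≤ ∑ d : γ.ConnectedComponent,
          ∑ c ∈ Finset.univ.filter (fun c => f c = d), w c :=
        Finset.sum_le_sum (fun d _ => hfiber d)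
    _ = ∑ c : H.ConnectedComponent, w c := Finset.sum_fiberwise _ _ _
    _ = _ := hsum
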